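/- (Ultrametric Schwarz lemma, evaluation form) Let f = Σ_{n ≥ h} a_n z^n be a power series over ℚ_p vanishing to order ≥ h at 0, with |f|_R < ∞, and let 0 < R' ≤ R. Then for every z ∈ ℚ_p with |z|_p ≤ R' (assuming convergence of f at z), |f(z)|_p ≤ (R'/R)^h |f|_R. -/

import Mathlib

open PowerSeries ENNReal

/-- The `R`-Gauss norm `|f|_R = sup_n R^n |a_n|_p` of a power series over `ℚ_p`. -/
noncomputable def gaussNorm {p : ℕ} [Fact p.Prime] (f : PowerSeries ℚ_[p]) (R : ℝ) : ℝ≥0∞ :=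
  ⨆ n : ℕ, ENNReal.ofReal (R ^ n * ‖coeff n f‖)

/-- Ultrametric Schwarz lemma, evaluation form: if `f` vanishes to order ≥ `h`
at `0`, `|f|_R < ∞`, `0 < R' ≤ R` and `|z|_p ≤ R'` with `f` convergent at `z`,
then `|f(z)|_p ≤ (R'/R)^h |f|_R`. -/
theorem ultrametric_schwarz_eval {p : ℕ} [Fact p.Prime]
    (f : PowerSeries ℚ_[p]) (h : ℕ) (hvan : ∀ n < h, coeff n f = 0)
    (R R' : ℝ) (hR' : 0 < R') (hRR : R' ≤ R) (hf : _root_.gaussNorm f R ≠ ⊤)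
    (z : ℚ_[p]) (hz : ‖z‖ ≤ R')
    (hconv : Summable (fun n : ℕ => coeff n f * z ^ n)) :
    ENNReal.ofReal ‖∑' n : ℕ, coeff n f * z ^ n‖ ≤
      ENNReal.ofReal ((R' / R) ^ h) * _root_.gaussNorm f R := by
  have hR : 0 < R := lt_of_lt_of_le hR' hRR
  set G : ℝ := (_root_.gaussNorm f R).toReal with hG
  have hGnn : 0 ≤ G := ENNReal.toReal_nonneg
  have hratio : 0 ≤ R' / R := div_nonneg hR'.le hR.le
  have hratio1 : R' / R ≤ 1 := div_le_one_of_le₀ hRR hR.le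
  have hcoef : ∀ n : ℕ, R ^ n * ‖coeff n f‖ ≤ G := by
    intro n
    have h1 : ENNReal.ofReal (R ^ n * ‖coeff n f‖) ≤ _root_.gaussNorm f R :=
      le_iSup (fun n : ℕ => ENNReal.ofReal (R ^ n * ‖coeff n f‖)) n
    have h2 := ENNReal.toReal_mono hf h1
    rwa [ENNReal.toReal_ofReal (by positivity)] at h2
  have hterm : ∀ n : ℕ, ‖coeff n f * z ^ n‖ ≤ (R' / R) ^ h * G := by
    intro n
    by_cases hn : n < h
    · rw [hvan n hn, zero_mul, norm_zero]
      positivity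
    · push_neg at hn
      have hzn : ‖z‖ ^ n ≤ R' ^ n := pow_le_pow_left₀ (norm_nonneg z) hz n
      calc ‖coeff n f * z ^ n‖ = ‖coeff n f‖ * ‖z‖ ^ n := by
            rw [norm_mul, norm_pow]
        _ ≤ ‖coeff n f‖ * R' ^ n :=
            mul_le_mul_of_nonneg_left hzn (norm_nonneg _)
        _ = (R' / R) ^ n * (R ^ n * ‖coeff n f‖) := by
            rw [div_pow, ← mul_assoc, div_mul_cancel₀ _ (pow_ne_zero n hR.ne'), mul_comm]
        _ ≤ (R' / R) ^ h * G := by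
            apply mul_le_mul (pow_le_pow_of_le_one hratio hratio1 hn) (hcoef n)
              (by positivity) (by positivity)
  have hsum : ‖∑' n : ℕ, coeff n f * z ^ n‖ ≤ (R' / R) ^ h * G :=
    IsUltrametricDist.norm_tsum_le_of_forall_le_of_nonneg (by positivity) hterm
  calc ENNReal.ofReal ‖∑' n : ℕ, coeff n f * z ^ n‖
      ≤ ENNReal.ofReal ((R' / R) ^ h * G) := ENNReal.ofReal_le_ofReal hsum
    _ = ENNReal.ofReal ((R' / R) ^ h) * ENNReal.ofReal G :=
        ENNReal.ofReal_mul (by positivity)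
    _ = ENNReal.ofReal ((R' / R) ^ h) * _root_.gaussNorm f R := by
        rw [hG, ENNReal.ofReal_toReal hf]
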